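/- Let m ∈ ℕ, let Y, A : Fin m → ℝ take values in {0,1}, and let r : Fin m → ℝ be nonnegative. Let X be the m × 2 real matrix with columns X_{i,0} = Y_i and X_{i,1} = Y_i·A_i, let R be the m × m diagonal matrix with diagonal entries Y_i·r_i, let V be the 2 × 2 matrix with rows (1, 0) and (−1, 1), and let S be the 2 × 2 diagonal matrix with diagonal entries ∑_i r_i·Y_i·(1 − A_i) and ∑_i r_i·Y_i·A_i. If ∑_i r_i·Y_i·(1 − A_i) > 0 and ∑_i r_i·Y_i·A_i > 0, then the 2 × 2 matrix Xᵀ R X is invertible and (Xᵀ R X)^{−1} = V S^{−1} Vᵀ. -/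

import Mathlib

open Matrix BigOperators

/-- If both weighted risk-group sums are positive, the weighted design matrix `XᵀRX` is
invertible and its inverse is `V S⁻¹ Vᵀ`, where `S` is the diagonal matrix of the two sums
and `V = !![1, 0; -1, 1]`. -/
theorem weighted_design_matrix_inverse
    (m : ℕ) (Y A : Fin m → ℝ)
    (hY : ∀ i, Y i = 0 ∨ Y i = 1) (hA : ∀ i, A i = 0 ∨ A i = 1)
    (r : Fin m → ℝ) (hr : ∀ i, 0 ≤ r i)
    (X : Matrix (Fin m) (Fin 2) ℝ)
    (hX : ∀ i, X i 0 = Y i ∧ X i 1 = Y i * A i)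
    (R : Matrix (Fin m) (Fin m) ℝ)
    (hR : R = Matrix.diagonal fun i => Y i * r i)
    (V : Matrix (Fin 2) (Fin 2) ℝ)
    (hV : V = !![1, 0; -1, 1])
    (S : Matrix (Fin 2) (Fin 2) ℝ)
    (hS : S = Matrix.diagonal ![∑ i, r i * Y i * (1 - A i), ∑ i, r i * Y i * A i])
    (ha : 0 < ∑ i, r i * Y i * (1 - A i)) (hb : 0 < ∑ i, r i * Y i * A i) :
    IsUnit (Xᵀ * R * X) ∧ (Xᵀ * R * X)⁻¹ = V * S⁻¹ * Vᵀ := by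
  set a := ∑ i, r i * Y i * (1 - A i) with hadef
  set b := ∑ i, r i * Y i * A i with hbdef
  have ha' : a ≠ 0 := ne_of_gt ha
  have hb' : b ≠ 0 := ne_of_gt hb
  have hX0 : ∀ k, X k 0 = Y k := fun k => (hX k).1
  have hX1 : ∀ k, X k 1 = Y k * A k := fun k => (hX k).2
  have hXR : Xᵀ * R = Matrix.of fun i k => X k i * (Y k * r k) := by
    rw [hR]; ext i k; simp [Matrix.mul_diagonal]
  have key : ∀ i j, (Xᵀ * R * X) i j = ∑ k, X k i * (Y k * r k) * X k j := by
    intro i j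
    rw [Matrix.mul_apply, hXR]
    rfl
  have hM : Xᵀ * R * X = !![a + b, b; b, b] := by
    rw [← Matrix.ext_iff]
    simp only [Fin.forall_fin_two]
    refine ⟨⟨?_, ?_⟩, ?_, ?_⟩ <;> rw [key] <;>
      simp only [Matrix.cons_val', Matrix.cons_val_zero, Matrix.cons_val_one,
        Matrix.head_cons, Matrix.head_fin_const, Matrix.empty_val',
        Matrix.cons_val_fin_one, Matrix.of_apply]
    · rw [hadef, hbdef, ← Finset.sum_add_distrib]
      refine Finset.sum_congr rfl fun k _ => ?_
      rw [hX0]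
      rcases hY k with h | h <;> simp [h] <;> ring
    · refine Finset.sum_congr rfl fun k _ => ?_
      rw [hX0, hX1]
      rcases hY k with h | h <;> simp [h] <;> ring
    · refine Finset.sum_congr rfl fun k _ => ?_
      rw [hX0, hX1]
      rcases hY k with h | h <;> simp [h] <;> ring
    · refine Finset.sum_congr rfl fun k _ => ?_
      rw [hX1]
      rcases hY k with h | h <;> rcases hA k with h2 | h2 <;> simp [h, h2]
  have hSmat : S = !![a, 0; 0, b] := by
    rw [hS]; ext i j; fin_cases i <;> fin_cases j <;>
      simp [Matrix.diagonal]
  have hSinv : S⁻¹ = !![a⁻¹, 0; 0, b⁻¹] := by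
    apply Matrix.inv_eq_right_inv
    rw [hSmat, Matrix.mul_fin_two, Matrix.one_fin_two]
    congr 1 <;> field_simp <;> simp
  have hVT : Vᵀ = !![1, -1; 0, 1] := by
    rw [hV]; ext i j; fin_cases i <;> fin_cases j <;> rfl
  have hmul : (Xᵀ * R * X) * (V * S⁻¹ * Vᵀ) = 1 := by
    rw [hM, hVT, hV, hSinv, Matrix.mul_fin_two, Matrix.mul_fin_two,
      Matrix.mul_fin_two, Matrix.one_fin_two]
    ext i j
    fin_cases i <;> fin_cases j <;> simp <;> field_simp <;> ring
  exact ⟨(Matrix.isUnit_iff_isUnit_det _).2 (Matrix.isUnit_det_of_right_inverse hmul), Matrix.inv_eq_right_inv hmul⟩
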